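/- Let k ≥ 3 be odd and let G be a finite group acting freely and tamely on S^k. For every n ≥ 1 and every 1 ≤ i ≤ n, there exists a continuous map λ_i : S^k → F_n^G(S^k) such that composing λ_i with the map ψ_n : F_n^G(S^k) → F_n(S^k/G) induced by the quotient, followed by projection onto the i-th coordinate, equals the quotient map q : S^k → S^k/G. -/

import Mathlib

/-- The standard `k`-sphere, as the unit sphere in `ℝ^{k+1}`. -/
abbrev Sph (k : ℕ) : Type := Metric.sphere (0 : EuclideanSpace ℝ (Fin (k + 1))) 1

/-- The `n`-th orbit configuration space of a `G`-space `X`: tuples `(x₁,…,x_n)` whose orbits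
`Gx_i` are pairwise disjoint (equivalently, with pairwise distinct images in `X/G`),
topologized as a subspace of `X^n`. -/
abbrev OrbitConf (G : Type) [Group G] (n : ℕ) (X : Type) [TopologicalSpace X]
    [MulAction G X] : Type :=
  {q : Fin n → X // ∀ i j : Fin n, i ≠ j →
    Quotient.mk (MulAction.orbitRel G X) (q i) ≠ Quotient.mk (MulAction.orbitRel G X) (q j)}

namespace Stmt15Aux

open Real

/-- Simultaneous rotation by angle `t` in each of the `m` coordinate 2-planes. -/
noncomputable def rot (m : ℕ) (t : ℝ) (x : EuclideanSpace ℝ (Fin m × Fin 2)) :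
    EuclideanSpace ℝ (Fin m × Fin 2) :=
  WithLp.toLp 2 fun p : Fin m × Fin 2 => if p.2 = 0 then Real.cos t * x (p.1, 0) - Real.sin t * x (p.1, 1)
    else Real.sin t * x (p.1, 0) + Real.cos t * x (p.1, 1)

lemma norm_sq_eq (m : ℕ) (y : EuclideanSpace ℝ (Fin m × Fin 2)) :
    ‖y‖ ^ 2 = ∑ p : Fin m × Fin 2, y p ^ 2 := by
  rw [EuclideanSpace.norm_eq, Real.sq_sqrt (by positivity)]
  simp [Real.norm_eq_abs, sq_abs]

lemma continuous_rot (m : ℕ) (t : ℝ) : Continuous (rot m t) := by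
  unfold rot
  apply (PiLp.continuous_toLp 2 _).comp
  apply continuous_pi
  intro p
  dsimp only
  split
  · exact (continuous_const.mul ((continuous_apply _).comp (PiLp.continuous_ofLp 2 _))).sub
      (continuous_const.mul ((continuous_apply _).comp (PiLp.continuous_ofLp 2 _)))
  · exact (continuous_const.mul ((continuous_apply _).comp (PiLp.continuous_ofLp 2 _))).add
      (continuous_const.mul ((continuous_apply _).comp (PiLp.continuous_ofLp 2 _)))

lemma norm_rot (m : ℕ) (t : ℝ) (x : EuclideanSpace ℝ (Fin m × Fin 2)) :
    ‖rot m t x‖ = ‖x‖ := by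
  have h : ‖rot m t x‖ ^ 2 = ‖x‖ ^ 2 := by
    rw [norm_sq_eq, norm_sq_eq, Fintype.sum_prod_type, Fintype.sum_prod_type]
    refine Finset.sum_congr rfl fun a _ => ?_
    rw [Fin.sum_univ_two, Fin.sum_univ_two]
    simp only [rot]
    norm_num
    have h1 := Real.sin_sq_add_cos_sq t
    linear_combination (x (a, 0) ^ 2 + x (a, 1) ^ 2) * h1
  have h2 := (sq_eq_sq_iff_abs_eq_abs _ _).mp h
  rwa [abs_of_nonneg (norm_nonneg _), abs_of_nonneg (norm_nonneg _)] at h2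

lemma norm_rot_sub_rot (m : ℕ) (t s : ℝ) (x : EuclideanSpace ℝ (Fin m × Fin 2)) :
    ‖rot m t x - rot m s x‖ ^ 2 = (2 - 2 * Real.cos (t - s)) * ‖x‖ ^ 2 := by
  rw [norm_sq_eq, norm_sq_eq, Finset.mul_sum, Fintype.sum_prod_type, Fintype.sum_prod_type]
  refine Finset.sum_congr rfl fun a _ => ?_
  rw [Fin.sum_univ_two, Fin.sum_univ_two]
  have e0 : (rot m t x - rot m s x) (a, 0)
      = (Real.cos t * x (a, 0) - Real.sin t * x (a, 1))
        - (Real.cos s * x (a, 0) - Real.sin s * x (a, 1)) := rfl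
  have e1 : (rot m t x - rot m s x) (a, 1)
      = (Real.sin t * x (a, 0) + Real.cos t * x (a, 1))
        - (Real.sin s * x (a, 0) + Real.cos s * x (a, 1)) := rfl
  rw [e0, e1, Real.cos_sub]
  have h1 := Real.sin_sq_add_cos_sq t
  have h2 := Real.sin_sq_add_cos_sq s
  linear_combination (x (a, 0) ^ 2 + x (a, 1) ^ 2) * h1 + (x (a, 0) ^ 2 + x (a, 1) ^ 2) * h2

lemma rot_zero (m : ℕ) (x : EuclideanSpace ℝ (Fin m × Fin 2)) : rot m 0 x = x := by
  ext p
  obtain ⟨a, b⟩ := p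
  fin_cases b <;> simp [rot]

end Stmt15Aux

set_option maxHeartbeats 1000000 in
/-- Let `k ≥ 3` be odd and let `G` be a finite group acting freely, continuously
and tamely on `S^k`. For every `n ≥ 1` and every `i`, there is a continuous map
`λ_i : S^k → F_n^G(S^k)` such that composing `λ_i` with the map
`ψ_n : F_n^G(S^k) → F_n(S^k/G)` induced coordinatewise by the quotient map, followed by
projection onto the `i`-th coordinate, equals the quotient map `q : S^k → S^k/G`. -/
theorem stmt_15 {k : ℕ} (hk : 3 ≤ k) (hkodd : Odd k) (G : Type) [Group G] [Finite G]
    [MulAction G (Sph k)]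
    (hcont : ∀ g : G, Continuous fun x : Sph k => g • x)
    (hfree : ∀ (g : G) (x : Sph k), g • x = x → g = 1)
    (htame : Nonempty (ChartedSpace (EuclideanSpace ℝ (Fin k))
      (Quotient (MulAction.orbitRel G (Sph k)))))
    (n : ℕ) (hn : 1 ≤ n) (i : Fin n) :
    ∃ lam : C(Sph k, OrbitConf G n (Sph k)),
      ∀ x : Sph k,
        Quotient.mk (MulAction.orbitRel G (Sph k)) ((lam x).val i) =
          Quotient.mk (MulAction.orbitRel G (Sph k)) x := by
  classical
  open Stmt15Aux in
  -- Split `k+1` into pairs of coordinates.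
  obtain ⟨d, hd⟩ := hkodd
  have hm : (d + 1) * 2 = k + 1 := by omega
  let eidx : Fin (k + 1) ≃ Fin (d + 1) × Fin 2 := (finProdFinEquiv.trans (finCongr hm)).symm
  let E : EuclideanSpace ℝ (Fin (k + 1)) ≃ₗᵢ[ℝ] EuclideanSpace ℝ (Fin (d + 1) × Fin 2) :=
    LinearIsometryEquiv.piLpCongrLeft 2 ℝ ℝ eidx
  set R : ℝ → EuclideanSpace ℝ (Fin (k + 1)) → EuclideanSpace ℝ (Fin (k + 1)) :=
    fun t x => E.symm (rot (d + 1) t (E x)) with hR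
  have hRnorm : ∀ t x, ‖R t x‖ = ‖x‖ := by
    intro t x
    rw [hR]
    simp only [E.symm.norm_map]
    rw [norm_rot, E.norm_map]
  have hRsub : ∀ t s x, ‖R t x - R s x‖ ^ 2 = (2 - 2 * Real.cos (t - s)) * ‖x‖ ^ 2 := by
    intro t s x
    rw [hR]
    simp only
    rw [← map_sub, E.symm.norm_map, norm_rot_sub_rot, E.norm_map]
  have hR0 : ∀ x, R 0 x = x := by
    intro x
    rw [hR]
    simp only [rot_zero]
    exact E.symm_apply_apply x
  have hRcont : ∀ t, Continuous (R t) :=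
    fun t => E.symm.continuous.comp ((continuous_rot (d + 1) t).comp E.continuous)
  -- a uniform lower bound for displacement by nontrivial group elements
  haveI : Fintype G := Fintype.ofFinite G
  have key : ∀ g : G, ∃ c : ℝ, 0 < c ∧ (g ≠ 1 → ∀ y : Sph k, c ≤ dist y (g • y)) := by
    intro g
    by_cases hg : g = 1
    · exact ⟨1, one_pos, fun h => absurd hg h⟩
    · have hc : Continuous fun y : Sph k => dist y (g • y) :=
        continuous_id.dist (hcont g)
      have hne : Nonempty (Sph k) := by
        refine ⟨⟨EuclideanSpace.single 0 (1 : ℝ), ?_⟩⟩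
        rw [mem_sphere_zero_iff_norm, EuclideanSpace.norm_single, norm_one]
      obtain ⟨y0, -, hy0⟩ := isCompact_univ.exists_isMinOn
        (Set.univ_nonempty) hc.continuousOn
      refine ⟨dist y0 (g • y0), ?_, fun _ y => hy0 (Set.mem_univ y)⟩
      rcases eq_or_lt_of_le (dist_nonneg (x := y0) (y := g • y0)) with h0 | h0
      · exfalso
        apply hg
        exact hfree g y0 (by rw [← dist_eq_zero]; rw [dist_comm]; exact h0.symm)
      · exact h0
  choose F hFpos hF using key
  -- the minimal displacement
  set δ0 : ℝ := Finset.univ.inf' Finset.univ_nonempty F with hδ0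
  have hδ0pos : 0 < δ0 := by
    rw [hδ0, Finset.lt_inf'_iff]
    exact fun g _ => hFpos g
  have hδ0le : ∀ g : G, δ0 ≤ F g := fun g =>
    Finset.inf'_le F (Finset.mem_univ g)
  set ε : ℝ := min 1 δ0 / 2 with hε
  have hεpos : 0 < ε := by positivity
  have hεone : ε ≤ 1 / 2 := by
    rw [hε]
    have : min 1 δ0 ≤ 1 := min_le_left _ _
    linarith
  have hεδ : ε < δ0 := by
    rw [hε]
    have : min 1 δ0 ≤ δ0 := min_le_right _ _
    linarith
  -- the angles
  set t : Fin n → ℝ := fun j => ε * (((j : ℕ) : ℝ) - ((i : ℕ) : ℝ)) / n with ht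
  have htdiff : ∀ j l : Fin n, j ≠ l →
      t j - t l ≠ 0 ∧ |t j - t l| ≤ ε := by
    intro j l hjl
    have hn0 : (0 : ℝ) < n := by exact_mod_cast hn
    have hsub : t j - t l = ε * (((j : ℕ) : ℝ) - ((l : ℕ) : ℝ)) / n := by
      rw [ht]; ring
    constructor
    · rw [hsub]
      have : ((j : ℕ) : ℝ) ≠ ((l : ℕ) : ℝ) := by
        exact_mod_cast fun h => hjl (Fin.ext h)
      intro hzero
      apply this
      have := mul_eq_zero.mp (div_eq_zero_iff.mp hzero |>.resolve_right (by positivity))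
      rcases this with h | h
      · exact absurd h (ne_of_gt hεpos)
      · linarith [sub_eq_zero.mp h]
    · rw [hsub, abs_div, abs_mul, abs_of_pos hεpos, abs_of_pos hn0]
      rw [div_le_iff₀ hn0]
      have hj : ((j : ℕ) : ℝ) < n := by exact_mod_cast j.isLt
      have hl : ((l : ℕ) : ℝ) < n := by exact_mod_cast l.isLt
      have hj0 : (0 : ℝ) ≤ ((j : ℕ) : ℝ) := by positivity
      have hl0 : (0 : ℝ) ≤ ((l : ℕ) : ℝ) := by positivity
      have habs : |((j : ℕ) : ℝ) - ((l : ℕ) : ℝ)| ≤ n := by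
        rw [abs_le]; constructor <;> linarith
      nlinarith [abs_nonneg (((j : ℕ) : ℝ) - ((l : ℕ) : ℝ))]
  -- distance between different rotated copies
  have hclose : ∀ (j l : Fin n) (x : Sph k), ‖R (t j) x.val - R (t l) x.val‖ ≤ |t j - t l| := by
    intro j l x
    have hx1 : ‖x.val‖ = 1 := mem_sphere_zero_iff_norm.mp x.2
    have h2 : ‖R (t j) x.val - R (t l) x.val‖ ^ 2 = 2 - 2 * Real.cos (t j - t l) := by
      rw [hRsub, hx1]; ring
    have hb := Real.one_sub_sq_div_two_le_cos (x := t j - t l)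
    have hsq : ‖R (t j) x.val - R (t l) x.val‖ ^ 2 ≤ |t j - t l| ^ 2 := by
      rw [h2, sq_abs]; linarith
    exact (abs_le_of_sq_le_sq' hsq (abs_nonneg _)).2
  -- the configuration map
  have hmem : ∀ (j : Fin n) (x : Sph k),
      R (t j) x.val ∈ Metric.sphere (0 : EuclideanSpace ℝ (Fin (k + 1))) 1 := by
    intro j x
    rw [mem_sphere_zero_iff_norm, hRnorm]
    exact mem_sphere_zero_iff_norm.mp x.2
  set f : Sph k → Fin n → Sph k := fun x j => ⟨R (t j) x.val, hmem j x⟩ with hf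
  -- distinctness of the orbits
  have hprop : ∀ x : Sph k, ∀ j l : Fin n, j ≠ l →
      Quotient.mk (MulAction.orbitRel G (Sph k)) (f x j) ≠
        Quotient.mk (MulAction.orbitRel G (Sph k)) (f x l) := by
    intro x j l hjl heq
    obtain ⟨hne, hle⟩ := htdiff j l hjl
    have hrel : f x j ∈ MulAction.orbit G (f x l) := Quotient.exact heq
    obtain ⟨g, hg⟩ := hrel
    simp only at hg
    by_cases hg1 : g = 1
    · subst hg1
      rw [one_smul] at hg
      have hvals : R (t l) x.val = R (t j) x.val := congrArg Subtype.val hg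
      have hx1 : ‖x.val‖ = 1 := mem_sphere_zero_iff_norm.mp x.2
      have h0 : (0 : ℝ) = 2 - 2 * Real.cos (t l - t j) := by
        have := hRsub (t l) (t j) x.val
        rw [hvals, sub_self, hx1] at this
        simpa using this
      have hcos : Real.cos (t l - t j) = 1 := by linarith
      have hπ : (3 : ℝ) < Real.pi := by
        have := Real.pi_gt_three
        linarith
      have habs : |t l - t j| ≤ ε := by rw [abs_sub_comm]; exact hle
      have h2π : |t l - t j| < 2 * Real.pi := by
        have h3 : (3 : ℝ) < Real.pi := Real.pi_gt_three
        linarith [habs, hεone]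
      obtain ⟨hlo, hhi⟩ := abs_lt.mp h2π
      have hz := (Real.cos_eq_one_iff_of_lt_of_lt (by linarith) hhi).mp hcos
      exact hne (by linarith)
    · -- nontrivial g moves points by at least δ0
      have hFg := hF g hg1 (f x l)
      rw [hg] at hFg
      have hdist : dist (f x l) (f x j) ≤ ε := by
        rw [Subtype.dist_eq, dist_eq_norm]
        calc ‖(f x l).val - (f x j).val‖ = ‖R (t l) x.val - R (t j) x.val‖ := rfl
          _ ≤ |t l - t j| := hclose l j x
          _ ≤ ε := by rw [abs_sub_comm]; exact hle
      have : δ0 ≤ ε := le_trans (hδ0le g) (le_trans hFg hdist)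
      linarith
  -- continuity
  refine ⟨⟨fun x => ⟨f x, hprop x⟩, ?_⟩, ?_⟩
  · apply Continuous.subtype_mk
    apply continuous_pi
    intro j
    apply Continuous.subtype_mk
    exact (hRcont (t j)).comp continuous_subtype_val
  · intro x
    have hti : t i = 0 := by rw [ht]; simp
    have hfi : f x i = x := by
      apply Subtype.ext
      show R (t i) x.val = x.val
      rw [hti, hR0]
    show Quotient.mk _ (f x i) = _
    rw [hfi]
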